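/- Let f ≠ 0 and J be real numbers. If u : ℝ → ℝ is continuously differentiable, periodic with period 1, and satisfies (φ'(x) − f)·u(x) + u'(x) = −J for all x, then u(x) = (J/(1 − e^{−f})) · w₀(f,x) for all x. In particular, the 1-periodic steady state of the Fokker–Planck equation with unit mass on [0,1] is unique. -/

import Mathlib

open MeasureTheory intervalIntegral Asymptotics Filter

noncomputable def w0 (φ : ℝ → ℝ) (f x : ℝ) : ℝ :=
  ∫ s in (0:ℝ)..1, Real.exp (φ (x + s) - φ x - f * s)

noncomputable def M0 (φ : ℝ → ℝ) (f : ℝ) : ℝ := ∫ x in (0:ℝ)..1, w0 φ f x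

noncomputable def w1 (φ : ℝ → ℝ) (f x : ℝ) : ℝ :=
  ∫ s in (0:ℝ)..1, (w0 φ f (x + s)) ^ 2 * Real.exp (φ (x + s) - φ x - f * s)

noncomputable def M1 (φ : ℝ → ℝ) (f : ℝ) : ℝ := ∫ x in (0:ℝ)..1, w1 φ f x


lemma key (φ : ℝ → ℝ) (hφ : ContDiff ℝ 1 φ)
    (f : ℝ) (hf : f ≠ 0) (J : ℝ) (u : ℝ → ℝ) (hu : ContDiff ℝ 1 u)
    (huper : ∀ x, u (x + 1) = u x) (hφper : ∀ x, φ (x + 1) = φ x)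
    (hode : ∀ x, (deriv φ x - f) * u x + deriv u x = -J) :
    ∀ x, u x = (J / (1 - Real.exp (-f))) * w0 φ f x := by
  have hφd : Differentiable ℝ φ := hφ.differentiable one_ne_zero
  have hud : Differentiable ℝ u := hu.differentiable one_ne_zero
  have hφc : Continuous φ := hφ.continuous
  intro x
  set g : ℝ → ℝ := fun t => u t * Real.exp (φ t - f * t) with hg
  have hgder : ∀ t, HasDerivAt g (-J * Real.exp (φ t - f * t)) t := by
    intro t
    have h1 : HasDerivAt (fun t => φ t - f * t) (deriv φ t - f) t :=
      ((hφd t).hasDerivAt).sub ((hasDerivAt_id t).const_mul f |>.congr_deriv (by ring))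
    have h2 : HasDerivAt (fun t => Real.exp (φ t - f * t))
        (Real.exp (φ t - f * t) * (deriv φ t - f)) t := h1.exp
    have h3 := ((hud t).hasDerivAt).mul h2
    refine h3.congr_deriv ?_
    linear_combination (Real.exp (φ t - f * t)) * hode t
  have hcont : Continuous (fun t => -J * Real.exp (φ t - f * t)) := by
    continuity
  have hint : ∫ t in x..(x+1), -J * Real.exp (φ t - f * t) = g (x+1) - g x :=
    intervalIntegral.integral_eq_sub_of_hasDerivAt (fun t _ => hgder t)
      (hcont.intervalIntegrable _ _)
  set E : ℝ := ∫ t in x..(x+1), Real.exp (φ t - f * t) with hE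
  have hintE : -J * E = g (x+1) - g x := by
    rw [hE, ← intervalIntegral.integral_const_mul]; exact hint
  have hg1 : g (x+1) = g x * Real.exp (-f) := by
    simp only [hg]
    rw [huper, hφper]
    rw [mul_assoc, ← Real.exp_add]
    ring_nf
  have hmain : J * E = u x * Real.exp (φ x - f * x) * (1 - Real.exp (-f)) := by
    rw [hg1] at hintE
    simp only [hg] at hintE
    nlinarith [hintE]
  -- w0 in terms of E
  have hw0 : w0 φ f x = E * Real.exp (f * x - φ x) := by
    have hrw : ∀ s : ℝ, Real.exp (φ (x + s) - φ x - f * s)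
        = Real.exp (φ (x + s) - f * (x + s)) * Real.exp (f * x - φ x) := by
      intro s; rw [← Real.exp_add]; ring_nf
    rw [w0]
    simp_rw [hrw]
    rw [intervalIntegral.integral_mul_const]
    congr 1
    have := intervalIntegral.integral_comp_add_left
      (fun t => Real.exp (φ t - f * t)) x (a := (0:ℝ)) (b := 1)
    simpa using this
  have hne : (1 : ℝ) - Real.exp (-f) ≠ 0 := by
    intro h
    have : Real.exp (-f) = 1 := by linarith
    rw [Real.exp_eq_one_iff] at this
    exact hf (by linarith)
  rw [hw0]
  have hexp : Real.exp (φ x - f * x) * Real.exp (f * x - φ x) = 1 := by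
    rw [← Real.exp_add]; ring_nf; exact Real.exp_zero
  field_simp
  linear_combination (-Real.exp (f * x - φ x)) * hmain
    - u x * (1 - Real.exp (-f)) * hexp

/-- If `u` is C¹, 1-periodic and satisfies
`(φ'(x) − f)·u(x) + u'(x) = −J` for all `x` (with `f ≠ 0`), then
`u(x) = (J/(1 − e^{−f}))·w₀(f,x)`; in particular the 1-periodic steady state
with unit mass on `[0,1]` is unique. -/
theorem stmt_2 (φ : ℝ → ℝ) (hφ : ContDiff ℝ 1 φ) (hφper : ∀ x, φ (x + 1) = φ x)
    (f : ℝ) (hf : f ≠ 0) (J : ℝ) (u : ℝ → ℝ) (hu : ContDiff ℝ 1 u)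
    (huper : ∀ x, u (x + 1) = u x)
    (hode : ∀ x, (deriv φ x - f) * u x + deriv u x = -J) :
    (∀ x, u x = (J / (1 - Real.exp (-f))) * w0 φ f x) ∧
    (∀ (v : ℝ → ℝ) (J' : ℝ), ContDiff ℝ 1 v → (∀ x, v (x + 1) = v x) →
      (∀ x, (deriv φ x - f) * v x + deriv v x = -J') →
      (∫ x in (0:ℝ)..1, u x) = 1 → (∫ x in (0:ℝ)..1, v x) = 1 →
      ∀ x, v x = u x) := by
  have h1 := key φ hφ f hf J u hu huper hφper hode
  refine ⟨h1, ?_⟩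
  intro v J' hv hvper hvode hu1 hv1 x
  have h2 := key φ hφ f hf J' v hv hvper hφper hvode
  set c := J / (1 - Real.exp (-f)) with hcdef
  set c' := J' / (1 - Real.exp (-f)) with hc'def
  have hc : c ≠ 0 := by
    intro h
    have hz : ∀ y, u y = 0 := fun y => by rw [h1 y, h, zero_mul]
    rw [show (∫ x in (0:ℝ)..1, u x) = 0 by simp [hz]] at hu1
    exact one_ne_zero hu1.symm
  have hveq : ∀ y, v y = (c' / c) * u y := by
    intro y
    rw [h2 y, h1 y]
    field_simp
  have hint : (∫ x in (0:ℝ)..1, v x) = c' / c * ∫ x in (0:ℝ)..1, u x := by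
    simp_rw [hveq]
    rw [intervalIntegral.integral_const_mul]
  rw [hu1, hv1] at hint
  rw [hveq x, mul_one] at *
  rw [← hint, one_mul]
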